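/- Let v be continuous and positive on (0,∞) and define φ(μ) = ∫_1^μ (μ−t)/v(t) dt, the alpha divergence d_α(x,μ) = μ·φ(x/μ), and ψθ(r) = ∫_1^r t/v(t) dt. Then d_α(x, μ) = ∫_μ^x ψθ(x/t) dt for all x, μ > 0. -/

import Mathlib

open MeasureTheory Set Filter

theorem alpha_divergence_integral_form
    (v : ℝ → ℝ) (hv : ContinuousOn v (Set.Ioi 0)) (hvpos : ∀ t > 0, 0 < v t)
    (φ ψθ : ℝ → ℝ)
    (hφ : ∀ μ, φ μ = ∫ t in (1:ℝ)..μ, (μ - t) / v t)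
    (hψθ : ∀ r, ψθ r = ∫ t in (1:ℝ)..r, t / v t) :
    ∀ x > (0:ℝ), ∀ μ > (0:ℝ),
      μ * φ (x / μ) = ∫ t in μ..x, ψθ (x / t) := by
  intro x hx μ hμ
  have hvne : ∀ t ∈ Set.Ioi (0:ℝ), v t ≠ 0 := fun t ht => (hvpos t ht).ne'
  have hg : ContinuousOn (fun t => t / v t) (Set.Ioi 0) := continuousOn_id.div hv hvne
  have hw : ContinuousOn (fun t => (1:ℝ) / v t) (Set.Ioi 0) := continuousOn_const.div hv hvne
  have huIcc : ∀ a b : ℝ, 0 < a → 0 < b → Set.uIcc a b ⊆ Set.Ioi 0 := by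
    intro a b ha hb t ht
    exact lt_of_lt_of_le (lt_min ha hb) ht.1
  set A : ℝ → ℝ := fun r => ∫ t in (1:ℝ)..r, 1 / v t with hA
  -- derivative of ψθ
  have hψd : ∀ r ∈ Set.Ioi (0:ℝ), HasDerivAt ψθ (r / v r) r := by
    intro r hr
    have h1 : HasDerivAt (fun u => ∫ t in (1:ℝ)..u, t / v t) (r / v r) r :=
      intervalIntegral.integral_hasDerivAt_right
        ((hg.mono (huIcc 1 r one_pos hr)).intervalIntegrable)
        (hg.stronglyMeasurableAtFilter isOpen_Ioi r hr)
        (hg.continuousAt (isOpen_Ioi.mem_nhds hr))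
    exact h1.congr_of_eventuallyEq (Eventually.of_forall fun y => hψθ y)
  have hAd : ∀ r ∈ Set.Ioi (0:ℝ), HasDerivAt A (1 / v r) r := by
    intro r hr
    exact intervalIntegral.integral_hasDerivAt_right
        ((hw.mono (huIcc 1 r one_pos hr)).intervalIntegrable)
        (hw.stronglyMeasurableAtFilter isOpen_Ioi r hr)
        (hw.continuousAt (isOpen_Ioi.mem_nhds hr))
  -- splitting of φ
  have hsplit : ∀ r ∈ Set.Ioi (0:ℝ), φ r = r * A r - ψθ r := by
    intro r hr
    have hi1 : IntervalIntegrable (fun t => r * (1 / v t)) volume 1 r :=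
      ((hw.mono (huIcc 1 r one_pos hr)).intervalIntegrable).const_mul r
    have hi2 : IntervalIntegrable (fun t => t / v t) volume 1 r :=
      (hg.mono (huIcc 1 r one_pos hr)).intervalIntegrable
    rw [hφ, hψθ, hA]
    have : ∀ t : ℝ, (r - t) / v t = r * (1 / v t) - t / v t := by
      intro t; rw [sub_div, mul_one_div]
    simp_rw [this]
    rw [intervalIntegral.integral_sub hi1 hi2, intervalIntegral.integral_const_mul]
  -- derivative of φ
  have hφd : ∀ r ∈ Set.Ioi (0:ℝ), HasDerivAt φ (A r) r := by
    intro r hr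
    have h1 : HasDerivAt (fun u => u * A u - ψθ u)
        (1 * A r + r * (1 / v r) - r / v r) r :=
      ((hasDerivAt_id r).mul (hAd r hr)).sub (hψd r hr)
    have h2 : (1 : ℝ) * A r + r * (1 / v r) - r / v r = A r := by
      rw [one_mul, mul_one_div]; ring
    rw [h2] at h1
    refine h1.congr_of_eventuallyEq ?_
    filter_upwards [isOpen_Ioi.mem_nhds hr] with y hy
    exact hsplit y hy
  -- LHS function G
  have hGd : ∀ t ∈ Set.Ioi (0:ℝ), HasDerivAt (fun μ => μ * φ (x / μ)) (-ψθ (x / t)) t := by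
    intro t ht
    have htne : (t : ℝ) ≠ 0 := ne_of_gt ht
    have hxt : x / t ∈ Set.Ioi (0:ℝ) := div_pos hx ht
    have hinner : HasDerivAt (fun μ => x / μ) (-x / t ^ 2) t := by
      have h0 := (hasDerivAt_const t x).div (hasDerivAt_id t) htne
      convert h0 using 1
      · rfl
      · rfl
      · rfl
      · simp
    have hcomp : HasDerivAt (fun μ => φ (x / μ)) (A (x / t) * (-x / t ^ 2)) t :=
      (hφd (x / t) hxt).comp t hinner
    have h1 : HasDerivAt (fun μ => μ * φ (x / μ))
        (1 * φ (x / t) + t * (A (x / t) * (-x / t ^ 2))) t :=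
      (hasDerivAt_id t).mul hcomp
    convert h1 using 1
    rw [hsplit (x / t) hxt]
    field_simp
    ring
  -- continuity of ψθ ∘ (x / ·)
  have hψc : ContinuousOn (fun t => ψθ (x / t)) (Set.Ioi 0) := by
    have hψcont : ContinuousOn ψθ (Set.Ioi 0) := fun r hr =>
      ((hψd r hr).continuousAt).continuousWithinAt
    exact hψcont.comp (continuousOn_const.div continuousOn_id
      (fun t ht => ne_of_gt ht)) (fun t ht => div_pos hx ht)
  -- RHS function F
  have hFd : ∀ t ∈ Set.Ioi (0:ℝ), HasDerivAt (fun μ => ∫ s in μ..x, ψθ (x / s)) (-ψθ (x / t)) t := by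
    intro t ht
    have h1 : HasDerivAt (fun μ => ∫ s in x..μ, ψθ (x / s)) (ψθ (x / t)) t :=
      intervalIntegral.integral_hasDerivAt_right
        ((hψc.mono (huIcc x t hx ht)).intervalIntegrable)
        (hψc.stronglyMeasurableAtFilter isOpen_Ioi t ht)
        (hψc.continuousAt (isOpen_Ioi.mem_nhds ht))
    have h2 := h1.neg
    refine h2.congr_of_eventuallyEq (Eventually.of_forall fun y => ?_)
    exact intervalIntegral.integral_symm x y
  -- the difference h
  set h : ℝ → ℝ := fun μ => μ * φ (x / μ) - ∫ s in μ..x, ψθ (x / s) with hh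
  have hhd : ∀ t ∈ Set.Ioi (0:ℝ), HasDerivAt h 0 t := by
    intro t ht
    have := (hGd t ht).sub (hFd t ht)
    simp at this
    exact this
  set a := min μ x with ha
  set b := max μ x with hb
  have hab : ∀ t ∈ Set.Icc a b, t ∈ Set.Ioi (0:ℝ) := by
    intro t ht
    exact lt_of_lt_of_le (lt_min hμ hx) ht.1
  have hcont : ContinuousOn h (Set.Icc a b) := fun t ht =>
    ((hhd t (hab t ht)).continuousAt).continuousWithinAt
  have hderiv : ∀ t ∈ Set.Ico a b, HasDerivWithinAt h 0 (Set.Ici t) t := fun t ht =>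
    (hhd t (hab t (Set.mem_Icc_of_Ico ht))).hasDerivWithinAt
  have hconst := constant_of_has_deriv_right_zero hcont hderiv
  have hμmem : μ ∈ Set.Icc a b := ⟨min_le_left _ _, le_max_left _ _⟩
  have hxmem : x ∈ Set.Icc a b := ⟨min_le_right _ _, le_max_right _ _⟩
  have hx0 : h x = 0 := by
    simp [hh, hφ, intervalIntegral.integral_same, div_self (ne_of_gt hx)]
  have : h μ = h x := by rw [hconst μ hμmem, hconst x hxmem]
  have hμ0 : h μ = 0 := by rw [this, hx0]
  have := sub_eq_zero.mp hμ0
  exact this
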